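/- If [g], [h] ∈ Σ_G/~ are distinct equivalence classes, then [I_{[g]}, I_{[h]}] = 0. -/
import Mathlib


open Submodule

section
variable {G : Type*} [CommGroup G]

/-- A chain connection: a nonempty list `c` starting at `g`, with all entries in
`Main ∪ Other`, all proper partial products in `Main`, and total product `g'` or `g'⁻¹`. -/
def ChainConnected (Main Other : Set G) (g g' : G) : Prop :=
  ∃ c : List G, c ≠ [] ∧ c.head? = some g ∧
    (∀ k ∈ c, k ∈ Main ∪ Other) ∧
    (∀ i : ℕ, 0 < i → i < c.length → (c.take i).prod ∈ Main) ∧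
    (c.prod = g' ∨ c.prod = g'⁻¹)

end

/-- A `G`-graded Lie-Rinehart algebra `(L, A)` over a field `F`. -/
structure GradedLieRinehart (F : Type*) [Field F] (G : Type*) [CommGroup G] [DecidableEq G]
    (A : Type*) [CommRing A] [Algebra F A]
    (L : Type*) [LieRing L] [LieAlgebra F L] [Module A L] [IsScalarTower F A L] where
  ρ : L →ₗ[F] Derivation F A A
  ρ_smul : ∀ (a : A) (v : L) (b : A), ρ (a • v) b = a * ρ v b
  ρ_bracket : ∀ v w : L, ρ ⁅v, w⁆ = ⁅ρ v, ρ w⁆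
  leibniz : ∀ (v w : L) (a : A), ⁅v, a • w⁆ = a • ⁅v, w⁆ + (ρ v a) • w
  𝓛 : G → Submodule F L
  𝓐 : G → Submodule F A
  internalL : DirectSum.IsInternal 𝓛
  internalA : DirectSum.IsInternal 𝓐
  bracket_mem : ∀ {g h : G} {v w : L}, v ∈ 𝓛 g → w ∈ 𝓛 h → ⁅v, w⁆ ∈ 𝓛 (g * h)
  mul_mem : ∀ {g h : G} {a b : A}, a ∈ 𝓐 g → b ∈ 𝓐 h → a * b ∈ 𝓐 (g * h)
  smul_mem : ∀ {h g : G} {a : A} {v : L}, a ∈ 𝓐 h → v ∈ 𝓛 g → a • v ∈ 𝓛 (h * g)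
  rho_mem : ∀ {g h : G} {v : L} {a : A}, v ∈ 𝓛 g → a ∈ 𝓐 h → ρ v a ∈ 𝓐 (g * h)

namespace GradedLieRinehart

variable {F : Type*} [Field F] {G : Type*} [CommGroup G] [DecidableEq G]
  {A : Type*} [CommRing A] [Algebra F A]
  {L : Type*} [LieRing L] [LieAlgebra F L] [Module A L] [IsScalarTower F A L]
variable (𝔏 : GradedLieRinehart F G A L)

/-- The support `Σ_G` of the grading of `L`. -/
def SuppL : Set G := {g | g ≠ 1 ∧ 𝔏.𝓛 g ≠ ⊥}

/-- The support `Λ_G` of the grading of `A`. -/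
def SuppA : Set G := {g | g ≠ 1 ∧ 𝔏.𝓐 g ≠ ⊥}

/-- `Σ_G^± = Σ_G ∪ Σ_G⁻¹`. -/
def Spm : Set G := {g | g ∈ 𝔏.SuppL ∨ g⁻¹ ∈ 𝔏.SuppL}

/-- `Λ_G^± = Λ_G ∪ Λ_G⁻¹`. -/
def Lpm : Set G := {g | g ∈ 𝔏.SuppA ∨ g⁻¹ ∈ 𝔏.SuppA}

/-- `g` is `Σ_G`-connected to `g'`. -/
def SigmaConnected (g g' : G) : Prop := ChainConnected 𝔏.Spm 𝔏.Lpm g g'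

/-- `g` is `Λ_G`-connected to `g'`. -/
def LambdaConnected (g g' : G) : Prop := ChainConnected (𝔏.Lpm ∪ 𝔏.Spm) (∅ : Set G) g g'

/-- The span of products `A_h • L_g`. -/
def smulSub (h g : G) : Submodule F L :=
  Submodule.span F {x | ∃ a ∈ 𝔏.𝓐 h, ∃ v ∈ 𝔏.𝓛 g, x = a • v}

/-- The span of brackets `[L_h, L_g]`. -/
def bracketSub (h g : G) : Submodule F L :=
  Submodule.span F {x | ∃ v ∈ 𝔏.𝓛 h, ∃ w ∈ 𝔏.𝓛 g, x = ⁅v, w⁆}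

/-- `L_{[g],1}`. -/
def L1class (g : G) : Submodule F L :=
  (⨆ g' ∈ {g' | g' ∈ 𝔏.SuppL ∧ 𝔏.SigmaConnected g g' ∧ g' ∈ 𝔏.SuppA}, 𝔏.smulSub g'⁻¹ g') ⊔
  (⨆ g' ∈ {g' | g' ∈ 𝔏.SuppL ∧ 𝔏.SigmaConnected g g'}, 𝔏.bracketSub g'⁻¹ g')

/-- `V_{[g]}`. -/
def Vclass (g : G) : Submodule F L :=
  ⨆ g' ∈ {g' | g' ∈ 𝔏.SuppL ∧ 𝔏.SigmaConnected g g'}, 𝔏.𝓛 g'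

/-- The ideal `I_{[g]} = L_{[g],1} ⊕ V_{[g]}` attached to the class of `g`. -/
def Iclass (g : G) : Submodule F L := 𝔏.L1class g ⊔ 𝔏.Vclass g

/-- `Σ_{g ∈ Σ_G ∩ Λ_G} A_{g⁻¹} L_g + Σ_{g ∈ Σ_G} [L_{g⁻¹}, L_g]`. -/
def L1full : Submodule F L :=
  (⨆ g ∈ 𝔏.SuppL ∩ 𝔏.SuppA, 𝔏.smulSub g⁻¹ g) ⊔ (⨆ g ∈ 𝔏.SuppL, 𝔏.bracketSub g⁻¹ g)

/-- An ideal of the Lie-Rinehart algebra `(L,A)`: a Lie ideal which is an `A`-submodule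
and satisfies `ρ(I)(A)L ⊆ I`. -/
def IsIdealL (I : Submodule F L) : Prop :=
  (∀ (x : L), ∀ y ∈ I, ⁅x, y⁆ ∈ I) ∧ (∀ (a : A), ∀ y ∈ I, a • y ∈ I) ∧
  (∀ v ∈ I, ∀ (a : A) (w : L), (𝔏.ρ v a) • w ∈ I)

/-- A graded submodule of `L`. -/
def IsGradedL (I : Submodule F L) : Prop := I = ⨆ k : G, I ⊓ 𝔏.𝓛 k

/-- A graded ideal of `(L,A)`. -/
def IsGradedIdealL (I : Submodule F L) : Prop := 𝔏.IsIdealL I ∧ 𝔏.IsGradedL I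

/-- `(L,A)` is gr-simple. -/
def GrSimpleL : Prop :=
  (∃ v w : L, ⁅v, w⁆ ≠ 0) ∧ (∃ a b : A, a * b ≠ 0) ∧ (∃ (a : A) (v : L), a • v ≠ 0) ∧
  ∀ I : Submodule F L, 𝔏.IsGradedIdealL I → I = ⊥ ∨ I = ⊤ ∨ I = LinearMap.ker 𝔏.ρ

/-- The span of products `A_h · A_g`. -/
def mulSub (h g : G) : Submodule F A :=
  Submodule.span F {x | ∃ a ∈ 𝔏.𝓐 h, ∃ b ∈ 𝔏.𝓐 g, x = a * b}

/-- The span of `ρ(L_h)(A_g)`. -/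
def rhoSub (h g : G) : Submodule F A :=
  Submodule.span F {x | ∃ v ∈ 𝔏.𝓛 h, ∃ a ∈ 𝔏.𝓐 g, x = 𝔏.ρ v a}

/-- `A_{[g],1}`. -/
def A1class (g : G) : Submodule F A :=
  (⨆ g' ∈ {g' | g' ∈ 𝔏.SuppA ∧ 𝔏.LambdaConnected g g' ∧ g' ∈ 𝔏.SuppL}, 𝔏.rhoSub g'⁻¹ g') ⊔
  (⨆ g' ∈ {g' | g' ∈ 𝔏.SuppA ∧ 𝔏.LambdaConnected g g'}, 𝔏.mulSub g'⁻¹ g')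

/-- `A_{[g]}`. -/
def Aclass (g : G) : Submodule F A :=
  ⨆ g' ∈ {g' | g' ∈ 𝔏.SuppA ∧ 𝔏.LambdaConnected g g'}, 𝔏.𝓐 g'

/-- `𝒜_{[g]} = A_{[g],1} ⊕ A_{[g]}`. -/
def calA (g : G) : Submodule F A := 𝔏.A1class g ⊔ 𝔏.Aclass g

/-- `Σ_{g ∈ Λ_G ∩ Σ_G} ρ(L_{g⁻¹})(A_g) + Σ_{g ∈ Λ_G} A_{g⁻¹} A_g`. -/
def A1full : Submodule F A :=
  (⨆ g ∈ 𝔏.SuppA ∩ 𝔏.SuppL, 𝔏.rhoSub g⁻¹ g) ⊔ (⨆ g ∈ 𝔏.SuppA, 𝔏.mulSub g⁻¹ g)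

/-- An ideal of the commutative associative algebra `A`. -/
def IsIdealA (I : Submodule F A) : Prop := ∀ (a : A), ∀ x ∈ I, a * x ∈ I

/-- A graded submodule of `A`. -/
def IsGradedA (I : Submodule F A) : Prop := I = ⨆ k : G, I ⊓ 𝔏.𝓐 k

/-- A graded ideal of `A`. -/
def IsGradedIdealA (I : Submodule F A) : Prop := IsIdealA I ∧ 𝔏.IsGradedA I

/-- `A` is gr-simple. -/
def GrSimpleA : Prop :=
  (∃ a b : A, a * b ≠ 0) ∧
  ∀ I : Submodule F A, 𝔏.IsGradedIdealA I → I = ⊥ ∨ I = ⊤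

/-- The graded Lie-Rinehart algebra `(L,A)` is tight. -/
def Tight : Prop :=
  (∀ v : L, (∀ w : L, ⁅v, w⁆ = 0) → 𝔏.ρ v = 0 → v = 0) ∧
  (∀ v : L, (∀ a : A, a • v = 0) → v = 0) ∧
  (∀ a : A, (∀ b : A, a * b = 0) → a = 0) ∧
  Submodule.span F {x : A | ∃ b c : A, x = b * c} = ⊤ ∧
  Submodule.span F {x : L | ∃ (a : A) (w : L), x = a • w} = ⊤ ∧
  𝔏.𝓛 1 = 𝔏.L1full ∧ 𝔏.𝓐 1 = 𝔏.A1full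

/-- `(L,A)` is of maximal length. -/
def MaximalLength : Prop :=
  (∀ g ∈ 𝔏.SuppL, Module.rank F (𝔏.𝓛 g) = 1) ∧ (∀ k ∈ 𝔏.SuppA, Module.rank F (𝔏.𝓐 k) = 1)

/-- `(L,A)` is `G`-multiplicative. -/
def GMultiplicative : Prop :=
  (∀ g ∈ 𝔏.SuppL, ∀ h ∈ 𝔏.SuppL, g * h ∈ 𝔏.SuppL → ∃ v ∈ 𝔏.𝓛 g, ∃ w ∈ 𝔏.𝓛 h, ⁅v, w⁆ ≠ 0) ∧
  (∀ k ∈ 𝔏.SuppA, ∀ g ∈ 𝔏.SuppL, k * g ∈ 𝔏.SuppL → ∃ a ∈ 𝔏.𝓐 k, ∃ v ∈ 𝔏.𝓛 g, a • v ≠ 0) ∧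
  (∀ k ∈ 𝔏.SuppA, ∀ j ∈ 𝔏.SuppA, k * j ∈ 𝔏.SuppA → ∃ a ∈ 𝔏.𝓐 k, ∃ b ∈ 𝔏.𝓐 j, a * b ≠ 0)

/-- A gr-simple ideal of `(L,A)`: a graded ideal with nonzero bracket whose only graded
ideals of `L` contained in it are `0`, itself and its intersection with `Ker ρ`. -/
def GrSimpleIdealL (I : Submodule F L) : Prop :=
  𝔏.IsGradedIdealL I ∧ (∃ x ∈ I, ∃ y ∈ I, ⁅x, y⁆ ≠ 0) ∧
  ∀ J : Submodule F L, 𝔏.IsGradedIdealL J → J ≤ I →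
    (J = ⊥ ∨ J = I ∨ J = LinearMap.ker 𝔏.ρ ⊓ I)

end GradedLieRinehart

open GradedLieRinehart

variable {F : Type*} [Field F] {G : Type*} [CommGroup G] [DecidableEq G]
  {A : Type*} [CommRing A] [Algebra F A]
  {L : Type*} [LieRing L] [LieAlgebra F L] [Module A L] [IsScalarTower F A L]

section ChainLemmas
variable {G : Type*} [CommGroup G] {M O : Set G} {a b z : G}

lemma prod_map_inv' (l : List G) : (l.map (·⁻¹)).prod = l.prod⁻¹ := by
  induction l with
  | nil => simp
  | cons x t ih => simp [ih, mul_inv_rev, mul_comm]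

lemma union_inv (hM : ∀ x ∈ M, x⁻¹ ∈ M) (hO : ∀ x ∈ O, x⁻¹ ∈ O) {x : G}
    (hx : x ∈ M ∪ O) : x⁻¹ ∈ M ∪ O := by
  rcases hx with h | h
  · exact Or.inl (hM _ h)
  · exact Or.inr (hO _ h)

lemma chain_self (ha : a ∈ M ∪ O) : ChainConnected M O a a :=
  ⟨[a], by simp, by simp, by simpa, fun i h1 h2 => by simp at h2; omega, Or.inl (by simp)⟩

lemma chain_self_inv (ha : a ∈ M ∪ O) : ChainConnected M O a a⁻¹ :=
  ⟨[a], by simp, by simp, by simpa, fun i h1 h2 => by simp at h2; omega, Or.inr (by simp)⟩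

lemma chain_pair (ha : a ∈ M) (ha' : a ∈ M ∪ O) (hb : b ∈ M ∪ O) :
    ChainConnected M O a (a * b) := by
  refine ⟨[a, b], by simp, by simp, ?_, ?_, Or.inl (by simp)⟩
  · intro k hk; simp at hk; rcases hk with rfl | rfl <;> assumption
  · intro i h1 h2
    simp at h2
    have : i = 1 := by omega
    subst this; simpa

lemma chain_map_inv (hM : ∀ x ∈ M, x⁻¹ ∈ M) (hO : ∀ x ∈ O, x⁻¹ ∈ O)
    (h : ChainConnected M O a b) : ChainConnected M O a⁻¹ b := by
  obtain ⟨c, hc, hhead, hmem, hpart, hprod⟩ := h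
  refine ⟨c.map (·⁻¹), by simpa, ?_, ?_, ?_, ?_⟩
  · rw [List.head?_map, hhead]; rfl
  · intro k hk
    simp only [List.mem_map] at hk
    obtain ⟨x, hx, rfl⟩ := hk
    exact union_inv hM hO (hmem x hx)
  · intro i h1 h2
    rw [List.length_map] at h2
    rw [← List.map_take, prod_map_inv']
    exact hM _ (hpart i h1 h2)
  · rw [prod_map_inv']
    rcases hprod with h | h
    · exact Or.inr (by rw [h])
    · exact Or.inl (by rw [h, inv_inv])

lemma chain_glue (c : List G) (hc : c ≠ []) (hhead : c.head? = some a)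
    (hmem : ∀ k ∈ c, k ∈ M ∪ O)
    (hpart : ∀ i : ℕ, 0 < i → i < c.length → (c.take i).prod ∈ M)
    (hprodM : c.prod ∈ M) (hconn : ChainConnected M O c.prod z) :
    ChainConnected M O a z := by
  obtain ⟨d, hd, hdhead, hdmem, hdpart, hdprod⟩ := hconn
  cases d with
  | nil => exact absurd rfl hd
  | cons p t =>
    have hp : p = c.prod := by simpa using hdhead
    subst hp
    refine ⟨c ++ t, by simp [hc], ?_, ?_, ?_, ?_⟩
    · cases c with
      | nil => exact absurd rfl hc
      | cons c0 ct => simpa using hhead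
    · intro k hk
      rcases List.mem_append.1 hk with h | h
      · exact hmem k h
      · exact hdmem k (List.mem_cons_of_mem _ h)
    · intro i h1 h2
      rw [List.length_append] at h2
      rw [List.take_append]
      by_cases hi : i ≤ c.length
      · rw [Nat.sub_eq_zero_of_le hi, List.take_zero, List.append_nil]
        rcases lt_or_eq_of_le hi with h | h
        · exact hpart i h1 h
        · rw [h, List.take_length]; exact hprodM
      · push_neg at hi
        rw [List.take_of_length_le (le_of_lt hi), List.prod_append]
        have := hdpart (i - c.length + 1) (by omega) (by simp; omega)
        rw [List.take_cons (by omega)] at this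
        simpa using this
    · rw [List.prod_append]
      have : c.prod * t.prod = (c.prod :: t).prod := by simp
      rw [this]
      exact hdprod

lemma chain_rev_aux (hM : ∀ x ∈ M, x⁻¹ ∈ M) (hO : ∀ x ∈ O, x⁻¹ ∈ O) (c : List G) :
    c ≠ [] → c.head? = some a → (∀ k ∈ c, k ∈ M ∪ O) →
    (∀ i : ℕ, 0 < i → i < c.length → (c.take i).prod ∈ M) → c.prod ∈ M →
    ChainConnected M O c.prod a := by
  induction c using List.reverseRecOn with
  | nil => intro h; exact absurd rfl h
  | append_singleton c' k ih =>
    intro _ hhead hmem hpart hprodM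
    rcases eq_or_ne c' [] with rfl | hc'
    · simp only [List.nil_append, List.head?_cons, Option.some.injEq] at hhead
      have he : ([] ++ [k]).prod = k := by simp
      rw [he] at hprodM ⊢
      rw [hhead] at hprodM ⊢
      exact chain_self (Or.inl hprodM)
    · have hhead' : c'.head? = some a := by
        cases c' with
        | nil => exact absurd rfl hc'
        | cons x xs => simpa using hhead
      have hmem' : ∀ j ∈ c', j ∈ M ∪ O := fun j hj => hmem j (List.mem_append_left _ hj)
      have hpart' : ∀ i : ℕ, 0 < i → i < c'.length → (c'.take i).prod ∈ M := by
        intro i h1 h2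
        have := hpart i h1 (by simp; omega)
        rwa [List.take_append, Nat.sub_eq_zero_of_le (le_of_lt h2),
          List.take_zero, List.append_nil] at this
      have hc'prod : c'.prod ∈ M := by
        have := hpart c'.length (by cases c' <;> simp_all) (by simp)
        rwa [List.take_append, Nat.sub_self, List.take_zero,
          List.append_nil, List.take_length] at this
      have IH := ih hc' hhead' hmem' hpart' hc'prod
      have hk : k ∈ M ∪ O := hmem k (by simp)
      have hprodeq : (c' ++ [k]).prod = c'.prod * k := by simp
      rw [hprodeq] at hprodM ⊢
      have hlp : ([c'.prod * k, k⁻¹]).prod = c'.prod := by simp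
      refine chain_glue [c'.prod * k, k⁻¹] (by simp) (by simp) ?_ ?_ ?_ ?_
      · intro j hj
        simp only [List.mem_cons, List.mem_singleton, List.not_mem_nil, or_false] at hj
        rcases hj with rfl | rfl
        · exact Or.inl hprodM
        · exact union_inv hM hO hk
      · intro i h1 h2
        simp only [List.length_cons, List.length_nil] at h2
        have : i = 1 := by omega
        subst this; simpa
      · rw [hlp]; exact hc'prod
      · rw [hlp]; exact IH

lemma chain_symm (hM : ∀ x ∈ M, x⁻¹ ∈ M) (hO : ∀ x ∈ O, x⁻¹ ∈ O) (hb : b ∈ M)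
    (h : ChainConnected M O a b) : ChainConnected M O b a := by
  obtain ⟨c, hc, hhead, hmem, hpart, hprod⟩ := h
  have hprodM : c.prod ∈ M := by
    rcases hprod with h | h <;> rw [h]
    · exact hb
    · exact hM _ hb
  have := chain_rev_aux hM hO c hc hhead hmem hpart hprodM
  rcases hprod with h | h
  · rwa [h] at this
  · rw [h] at this
    have := chain_map_inv hM hO this
    rwa [inv_inv] at this

lemma chain_trans (hM : ∀ x ∈ M, x⁻¹ ∈ M) (hO : ∀ x ∈ O, x⁻¹ ∈ O) (hb : b ∈ M)
    (h1 : ChainConnected M O a b) (h2 : ChainConnected M O b z) :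
    ChainConnected M O a z := by
  obtain ⟨c, hc, hhead, hmem, hpart, hprod⟩ := h1
  have hprodM : c.prod ∈ M := by
    rcases hprod with h | h <;> rw [h]
    · exact hb
    · exact hM _ hb
  refine chain_glue c hc hhead hmem hpart hprodM ?_
  rcases hprod with h | h
  · rwa [h]
  · rw [h]; exact chain_map_inv hM hO h2

end ChainLemmas

section Helpers

variable {F : Type*} [Field F] {G : Type*} [CommGroup G] [DecidableEq G]
  {A : Type*} [CommRing A] [Algebra F A]
  {L : Type*} [LieRing L] [LieAlgebra F L] [Module A L] [IsScalarTower F A L]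
variable (𝔏 : GradedLieRinehart F G A L)

lemma spm_inv : ∀ x ∈ 𝔏.Spm, x⁻¹ ∈ 𝔏.Spm := by
  intro x hx
  rcases hx with h | h
  · exact Or.inr (by simpa using h)
  · exact Or.inl h

lemma lpm_inv : ∀ x ∈ 𝔏.Lpm, x⁻¹ ∈ 𝔏.Lpm := by
  intro x hx
  rcases hx with h | h
  · exact Or.inr (by simpa using h)
  · exact Or.inl h

variable {𝔏}

lemma conn_of_classes {g h p q : G} (hp1 : p ∈ 𝔏.SuppL) (hp2 : 𝔏.SigmaConnected g p)
    (hq1 : q ∈ 𝔏.SuppL) (hq2 : 𝔏.SigmaConnected h q) (hpq : 𝔏.SigmaConnected p q) :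
    𝔏.SigmaConnected g h :=
  chain_trans (spm_inv 𝔏) (lpm_inv 𝔏) (Or.inl hp1) hp2
    (chain_trans (spm_inv 𝔏) (lpm_inv 𝔏) (Or.inl hq1) hpq
      (chain_symm (spm_inv 𝔏) (lpm_inv 𝔏) (Or.inl hq1) hq2))

lemma class_inv {g p : G} (hp1 : p ∈ 𝔏.SuppL) (hp2 : 𝔏.SigmaConnected g p)
    (hbot : 𝔏.𝓛 p⁻¹ ≠ ⊥) : p⁻¹ ∈ 𝔏.SuppL ∧ 𝔏.SigmaConnected g p⁻¹ :=
  ⟨⟨inv_ne_one.2 hp1.1, hbot⟩,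
    chain_trans (spm_inv 𝔏) (lpm_inv 𝔏) (Or.inl hp1) hp2
      (chain_self_inv (Or.inl (Or.inl hp1)))⟩

lemma bz {g h p q : G} (hne : ¬ 𝔏.SigmaConnected g h)
    (hp1 : p ∈ 𝔏.SuppL) (hp2 : 𝔏.SigmaConnected g p)
    (hq1 : q ∈ 𝔏.SuppL) (hq2 : 𝔏.SigmaConnected h q) :
    ∀ v ∈ 𝔏.𝓛 p, ∀ w ∈ 𝔏.𝓛 q, ⁅v, w⁆ = 0 := by
  intro v hv w hw
  by_contra hbr
  have hmem := 𝔏.bracket_mem hv hw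
  have hbot : 𝔏.𝓛 (p * q) ≠ ⊥ := fun hb => hbr (by simpa [hb] using hmem)
  have hpq : 𝔏.SigmaConnected p q := by
    by_cases h1 : p * q = 1
    · have hq : q = p⁻¹ := by
        rw [← inv_eq_of_mul_eq_one_right h1]
      rw [hq]
      exact chain_self_inv (Or.inl (Or.inl hp1))
    · have hpqS : p * q ∈ 𝔏.SuppL := ⟨h1, hbot⟩
      have c1 : 𝔏.SigmaConnected p (p * q) :=
        chain_pair (Or.inl hp1) (Or.inl (Or.inl hp1)) (Or.inl (Or.inl hq1))
      have c2 : 𝔏.SigmaConnected q (p * q) := by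
        have := chain_pair (M := 𝔏.Spm) (O := 𝔏.Lpm)
          (Or.inl hq1) (Or.inl (Or.inl hq1)) (Or.inl (Or.inl hp1))
        rwa [mul_comm q p] at this
      exact chain_trans (spm_inv 𝔏) (lpm_inv 𝔏) (Or.inl hpqS) c1
        (chain_symm (spm_inv 𝔏) (lpm_inv 𝔏) (Or.inl hpqS) c2)
  exact hne (conn_of_classes hp1 hp2 hq1 hq2 hpq)

lemma rz {g h p q : G} (hne : ¬ 𝔏.SigmaConnected g h)
    (hp1 : p ∈ 𝔏.SuppL) (hp2 : 𝔏.SigmaConnected g p)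
    (hq1 : q ∈ 𝔏.SuppL) (hq2 : 𝔏.SigmaConnected h q) :
    ∀ v ∈ 𝔏.𝓛 p, ∀ b ∈ 𝔏.𝓐 q⁻¹, 𝔏.ρ v b = 0 := by
  intro v hv b hb
  by_contra hr
  have hmem := 𝔏.rho_mem hv hb
  have hbot : 𝔏.𝓐 (p * q⁻¹) ≠ ⊥ := fun h0 => hr (by simpa [h0] using hmem)
  have hpq : 𝔏.SigmaConnected p q := by
    by_cases h1 : p * q⁻¹ = 1
    · have hq : p = q := by
        have := mul_inv_eq_one.1 h1
        exact this
      rw [← hq]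
      exact chain_self (Or.inl (Or.inl hp1))
    · have hA : p * q⁻¹ ∈ 𝔏.SuppA := ⟨h1, hbot⟩
      have hOmem : p⁻¹ * q ∈ 𝔏.Lpm := by
        refine Or.inr ?_
        have : (p⁻¹ * q)⁻¹ = p * q⁻¹ := by rw [mul_inv_rev, inv_inv, mul_comm]
        rw [this]; exact hA
      have := chain_pair (M := 𝔏.Spm) (O := 𝔏.Lpm)
        (Or.inl hp1) (Or.inl (Or.inl hp1)) (Or.inr hOmem)
      rwa [mul_inv_cancel_left] at this
  exact hne (conn_of_classes hp1 hp2 hq1 hq2 hpq)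

/-- The generators of `I_{[g]}`. -/
def GenElems (𝔏 : GradedLieRinehart F G A L) (g : G) (y : L) : Prop :=
  ∃ q, (q ∈ 𝔏.SuppL ∧ 𝔏.SigmaConnected g q) ∧
    ((∃ b ∈ 𝔏.𝓐 q⁻¹, ∃ w ∈ 𝔏.𝓛 q, y = b • w) ∨
     (∃ t ∈ 𝔏.𝓛 q⁻¹, ∃ w ∈ 𝔏.𝓛 q, y = ⁅t, w⁆) ∨
     y ∈ 𝔏.𝓛 q)

lemma Iclass_le {g : G} (N : Submodule F L) (hN : ∀ y, GenElems 𝔏 g y → y ∈ N) :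
    𝔏.Iclass g ≤ N := by
  unfold GradedLieRinehart.Iclass GradedLieRinehart.L1class GradedLieRinehart.Vclass
  refine sup_le (sup_le ?_ ?_) ?_
  · refine iSup₂_le fun g₁ hg₁ => ?_
    rw [GradedLieRinehart.smulSub]
    refine Submodule.span_le.2 ?_
    rintro x ⟨a, ha, v, hv, rfl⟩
    exact hN _ ⟨g₁, ⟨hg₁.1, hg₁.2.1⟩, Or.inl ⟨a, ha, v, hv, rfl⟩⟩
  · refine iSup₂_le fun g₁ hg₁ => ?_
    rw [GradedLieRinehart.bracketSub]
    refine Submodule.span_le.2 ?_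
    rintro x ⟨u, hu, v, hv, rfl⟩
    exact hN _ ⟨g₁, hg₁, Or.inr (Or.inl ⟨u, hu, v, hv, rfl⟩)⟩
  · exact iSup₂_le fun g₁ hg₁ => fun x hx => hN _ ⟨g₁, hg₁, Or.inr (Or.inr hx)⟩

lemma lie_gen_right {g h p : G} (hne : ¬ 𝔏.SigmaConnected g h)
    (hp1 : p ∈ 𝔏.SuppL) (hp2 : 𝔏.SigmaConnected g p) :
    ∀ v ∈ 𝔏.𝓛 p, ∀ y, GenElems 𝔏 h y → ⁅v, y⁆ = 0 := by
  rintro v hv y ⟨q, ⟨hq1, hq2⟩, hy⟩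
  rcases hy with ⟨b, hb, w, hw, rfl⟩ | ⟨t, ht, w, hw, rfl⟩ | hy
  · rw [𝔏.leibniz, bz hne hp1 hp2 hq1 hq2 v hv w hw, rz hne hp1 hp2 hq1 hq2 v hv b hb]
    simp
  · by_cases ht0 : t = 0
    · simp [ht0]
    · obtain ⟨hq1', hq2'⟩ :=
        class_inv hq1 hq2 ((𝔏.𝓛 q⁻¹).ne_bot_iff.2 ⟨t, ht, ht0⟩)
      rw [leibniz_lie, bz hne hp1 hp2 hq1' hq2' v hv t ht, bz hne hp1 hp2 hq1 hq2 v hv w hw]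
      simp
  · exact bz hne hp1 hp2 hq1 hq2 v hv y hy

lemma hne_symm {g h : G} (hg : g ∈ 𝔏.SuppL) (hne : ¬ 𝔏.SigmaConnected g h) :
    ¬ 𝔏.SigmaConnected h g :=
  fun c => hne (chain_symm (spm_inv 𝔏) (lpm_inv 𝔏) (Or.inl hg) c)

lemma lie_smul_left {g h p q : G} (hg : g ∈ 𝔏.SuppL) (hne : ¬ 𝔏.SigmaConnected g h)
    (hp1 : p ∈ 𝔏.SuppL) (hp2 : 𝔏.SigmaConnected g p)
    (hq1 : q ∈ 𝔏.SuppL) (hq2 : 𝔏.SigmaConnected h q) :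
    ∀ a ∈ 𝔏.𝓐 p⁻¹, ∀ v ∈ 𝔏.𝓛 p, ∀ w ∈ 𝔏.𝓛 q, ⁅a • v, w⁆ = 0 := by
  intro a ha v hv w hw
  have hne' := hne_symm hg hne
  have h1 : ⁅w, a • v⁆ = 0 := by
    rw [𝔏.leibniz w v a, bz hne' hq1 hq2 hp1 hp2 w hw v hv,
      rz hne' hq1 hq2 hp1 hp2 w hw a ha]
    simp
  rw [← lie_skew, h1, neg_zero]

lemma gen_gen {g h : G} (hg : g ∈ 𝔏.SuppL) (hne : ¬ 𝔏.SigmaConnected g h) :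
    ∀ x, GenElems 𝔏 g x → ∀ y, GenElems 𝔏 h y → ⁅x, y⁆ = 0 := by
  rintro x ⟨p, ⟨hp1, hp2⟩, hx⟩ y hy
  rcases hx with ⟨a, ha, v, hv, rfl⟩ | ⟨u, hu, v, hv, rfl⟩ | hx
  · -- x = a • v
    obtain ⟨q, ⟨hq1, hq2⟩, hy'⟩ := hy
    rcases hy' with ⟨b, hb, w, hw, rfl⟩ | ⟨t, ht, w, hw, rfl⟩ | hy'
    · rw [𝔏.leibniz (a • v) w b, lie_smul_left hg hne hp1 hp2 hq1 hq2 a ha v hv w hw,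
        𝔏.ρ_smul a v b, rz hne hp1 hp2 hq1 hq2 v hv b hb]
      simp
    · by_cases ht0 : t = 0
      · simp [ht0]
      · obtain ⟨hq1', hq2'⟩ :=
          class_inv hq1 hq2 ((𝔏.𝓛 q⁻¹).ne_bot_iff.2 ⟨t, ht, ht0⟩)
        rw [leibniz_lie, lie_smul_left hg hne hp1 hp2 hq1' hq2' a ha v hv t ht,
          lie_smul_left hg hne hp1 hp2 hq1 hq2 a ha v hv w hw]
        simp
    · exact lie_smul_left hg hne hp1 hp2 hq1 hq2 a ha v hv y hy'
  · -- x = ⁅u, v⁆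
    have h1 : ⁅v, y⁆ = 0 := lie_gen_right hne hp1 hp2 v hv y hy
    have h2 : ⁅u, y⁆ = 0 := by
      by_cases hu0 : u = 0
      · simp [hu0]
      · obtain ⟨hp1', hp2'⟩ :=
          class_inv hp1 hp2 ((𝔏.𝓛 p⁻¹).ne_bot_iff.2 ⟨u, hu, hu0⟩)
        exact lie_gen_right hne hp1' hp2' u hu y hy
    rw [lie_lie, h1, h2]
    simp
  · exact lie_gen_right hne hp1 hp2 x hx y hy

end Helpers

/-- If `[g] ≠ [h]` then `[I_{[g]}, I_{[h]}] = 0`. -/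
theorem Iclass_bracket_ne (𝔏 : GradedLieRinehart F G A L) {g h : G}
    (hg : g ∈ 𝔏.SuppL) (hh : h ∈ 𝔏.SuppL) (hne : ¬ 𝔏.SigmaConnected g h) :
    ∀ x ∈ 𝔏.Iclass g, ∀ y ∈ 𝔏.Iclass h, ⁅x, y⁆ = 0 := by
  intro x hx y hy
  have key := gen_gen hg hne
  have hx' : ∀ y', GenElems 𝔏 h y' → ⁅x, y'⁆ = 0 := by
    intro y' hy'
    have hle : 𝔏.Iclass g ≤ LinearMap.ker (LieAlgebra.ad F L y') := by
      refine Iclass_le _ fun x' hx'' => ?_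
      rw [LinearMap.mem_ker, LieAlgebra.ad_apply, ← neg_eq_zero, lie_skew]
      exact key x' hx'' y' hy'
    have := hle hx
    rw [LinearMap.mem_ker, LieAlgebra.ad_apply, ← neg_eq_zero, lie_skew] at this
    simpa using this
  have hle2 : 𝔏.Iclass h ≤ LinearMap.ker (LieAlgebra.ad F L x) := by
    refine Iclass_le _ fun y' hy' => ?_
    rw [LinearMap.mem_ker, LieAlgebra.ad_apply]
    exact hx' y' hy'
  have := hle2 hy
  rwa [LinearMap.mem_ker, LieAlgebra.ad_apply] at this
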